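/- arXiv:2401.03566 — 3 statements merged into one kernel-verified Lean document; each statement's English description precedes it below -/
import Mathlib

section
/- Let Δ = Δ_1 ⊔ … ⊔ Δ_m be a partition of a finite root system Δ into m ≥ 2 nonempty parts such that each Δ_i and each Δ_i ⊔ Δ_j is closed. If β, γ ∈ Δ are roots with β - γ ∈ Δ, and both β, -β ∈ Δ_a for some index a, and both γ, -γ ∈ Δ_b for some index b, then a = b. -/
/-- A subset `S` of a root system `Δ` (in an ambient additive group `V`) is closed if
`α, β ∈ S` and `α + β ∈ Δ` imply `α + β ∈ S`. -/
def RootClosed {V : Type*} [AddCommGroup V] (Δ S : Set V) : Prop :=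
  ∀ a ∈ S, ∀ b ∈ S, a + b ∈ Δ → a + b ∈ S

theorem stmt1 {V : Type*} [AddCommGroup V] (Δ : Set V)
    (hfin : Δ.Finite) (hzero : (0 : V) ∉ Δ) (hsymm : ∀ α ∈ Δ, -α ∈ Δ)
    (m : ℕ) (hm : 2 ≤ m) (P : Fin m → Set V)
    (hcover : (⋃ i, P i) = Δ)
    (hne : ∀ i, (P i).Nonempty)
    (hdisj : Pairwise fun i j => Disjoint (P i) (P j))
    (hclosed : ∀ i, RootClosed Δ (P i))
    (hclosed2 : ∀ i j, i ≠ j → RootClosed Δ (P i ∪ P j))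
    (β γ : V) (hβ : β ∈ Δ) (hγ : γ ∈ Δ) (hdiff : β - γ ∈ Δ)
    (a b : Fin m)
    (hβa : β ∈ P a) (hnβa : -β ∈ P a)
    (hγb : γ ∈ P b) (hnγb : -γ ∈ P b) :
    a = b := by
  by_contra hab
  have hsum : β + -γ ∈ Δ := by simpa [sub_eq_add_neg] using hdiff
  have h1 : β + -γ ∈ P a ∪ P b :=
    hclosed2 a b hab β (Or.inl hβa) (-γ) (Or.inr hnγb) hsum
  rcases h1 with h | h
  · have h2 : (β + -γ) + -β ∈ P a := by
      refine hclosed a _ h _ hnβa ?_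
      have : (β + -γ) + -β = -γ := by abel
      rw [this]; exact hsymm γ hγ
    have h3 : -γ ∈ P a := by
      have : (β + -γ) + -β = -γ := by abel
      rwa [this] at h2
    exact Set.disjoint_left.mp (hdisj hab) h3 hnγb
  · have h2 : (β + -γ) + γ ∈ P b := by
      refine hclosed b _ h _ hγb ?_
      have : (β + -γ) + γ = β := by abel
      rw [this]; exact hβ
    have h3 : β ∈ P b := by
      have : (β + -γ) + γ = β := by abel
      rwa [this] at h2
    exact Set.disjoint_left.mp (hdisj hab) hβa h3
end

section
/- Let Δ = Δ_1 ⊔ Δ_2 ⊔ Δ_3 ⊔ Δ_4 be a partition of a finite root system into four parts such that each part and each union of two parts is closed. Suppose β, γ ∈ Δ with β - γ ∈ Δ. Then it is impossible that β ∈ Δ_1, -β ∈ Δ_2, γ ∈ Δ_3, -γ ∈ Δ_4. -/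
theorem stmt3 {V : Type*} [AddCommGroup V] (Δ : Set V)
    (hfin : Δ.Finite) (hzero : (0 : V) ∉ Δ) (hsymm : ∀ α ∈ Δ, -α ∈ Δ)
    (P : Fin 4 → Set V)
    (hcover : (⋃ i, P i) = Δ)
    (hne : ∀ i, (P i).Nonempty)
    (hdisj : Pairwise fun i j => Disjoint (P i) (P j))
    (hclosed : ∀ i, RootClosed Δ (P i))
    (hclosed2 : ∀ i j, i ≠ j → RootClosed Δ (P i ∪ P j))
    (β γ : V) (hβ : β ∈ Δ) (hγ : γ ∈ Δ) (hdiff : β - γ ∈ Δ) :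
    ¬(β ∈ P 0 ∧ -β ∈ P 1 ∧ γ ∈ P 2 ∧ -γ ∈ P 3) := by
  rintro ⟨h0, h1, h2, h3⟩
  have hsub : β - γ = β + (-γ) := by abel
  have hmem : β - γ ∈ P 0 ∪ P 3 := by
    rw [hsub]
    exact hclosed2 0 3 (by decide) β (Or.inl h0) (-γ) (Or.inr h3) (hsub ▸ hdiff)
  rcases hmem with h | h
  · -- (β - γ) + (-β) = -γ ∈ P 0 ∪ P 1, contradicting -γ ∈ P 3
    have key : (β - γ) + (-β) ∈ P 0 ∪ P 1 := by
      refine hclosed2 0 1 (by decide) _ (Or.inl h) _ (Or.inr h1) ?_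
      have : (β - γ) + (-β) = -γ := by abel
      rw [this]; exact hsymm γ hγ
    have hng : -γ ∈ P 0 ∪ P 1 := by
      have : (β - γ) + (-β) = -γ := by abel
      rwa [this] at key
    rcases hng with h' | h'
    · exact (hdisj (show (0:Fin 4) ≠ 3 by decide)).ne_of_mem h' h3 rfl
    · exact (hdisj (show (1:Fin 4) ≠ 3 by decide)).ne_of_mem h' h3 rfl
  · -- (β - γ) + γ = β ∈ P 3 ∪ P 2, contradicting β ∈ P 0
    have key : (β - γ) + γ ∈ P 3 ∪ P 2 := by
      refine hclosed2 3 2 (by decide) _ (Or.inl h) _ (Or.inr h2) ?_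
      have : (β - γ) + γ = β := by abel
      rw [this]; exact hβ
    have hb : β ∈ P 3 ∪ P 2 := by
      have : (β - γ) + γ = β := by abel
      rwa [this] at key
    rcases hb with h' | h'
    · exact (hdisj (show (3:Fin 4) ≠ 0 by decide)).ne_of_mem h' h0 rfl
    · exact (hdisj (show (2:Fin 4) ≠ 0 by decide)).ne_of_mem h' h0 rfl
end

section
/- Let Δ = S_1 ⊔ S_2 be a partition of a finite root system into two closed subsets, and let S_i^s = S_i ∩ (-S_i) be the symmetric parts. Then S_1^s and S_2^s are strongly orthogonal: for every α ∈ S_1^s and β ∈ S_2^s, neither α + β nor α - β is a root. -/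
theorem stmt16 {V : Type*} [AddCommGroup V] (Δ : Set V)
    (hfin : Δ.Finite) (hzero : (0 : V) ∉ Δ) (hsymm : ∀ α ∈ Δ, -α ∈ Δ)
    (S₁ S₂ : Set V)
    (hcover : S₁ ∪ S₂ = Δ) (hdisj : Disjoint S₁ S₂)
    (hclosed1 : RootClosed Δ S₁) (hclosed2 : RootClosed Δ S₂) :
    ∀ α ∈ S₁ ∩ (-S₁), ∀ β ∈ S₂ ∩ (-S₂), α + β ∉ Δ ∧ α - β ∉ Δ := by
  have key : ∀ a ∈ S₁, -a ∈ S₁ → ∀ b ∈ S₂, -b ∈ S₂ → a + b ∉ Δ := by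
    intro a ha ha' b hb hb' hab
    have haΔ : a ∈ Δ := hcover ▸ Or.inl ha
    have hbΔ : b ∈ Δ := hcover ▸ Or.inr hb
    have : a + b ∈ S₁ ∪ S₂ := hcover ▸ hab
    rcases this with h | h
    · have hbS : b ∈ S₁ := by
        have h1 := hclosed1 (a + b) h (-a) ha' (by simpa [add_assoc] using hbΔ)
        simpa [add_assoc] using h1
      exact (Set.disjoint_left.mp hdisj hbS) hb
    · have haS : a ∈ S₂ := by
        have h1 := hclosed2 (a + b) h (-b) hb' (by simpa using haΔ)
        simpa using h1
      exact (Set.disjoint_left.mp hdisj ha) haS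
  rintro α ⟨hα, hα'⟩ β ⟨hβ, hβ'⟩
  rw [Set.mem_neg] at hα' hβ'
  refine ⟨key α hα hα' β hβ hβ', ?_⟩
  have := key α hα hα' (-β) hβ' (by simpa using hβ)
  simpa [sub_eq_add_neg] using this
end
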